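/- Let $\mu_1,\dots,\mu_n$ be probability measures on $\mathbb{R}_+$ with finite first moments, let $(\mathbb{Q}^{(N)})_{N \in \mathbb{N}}$ be martingale measures in $\mathcal{M}(\mu_1,\dots,\mu_n)$ converging weakly to $\mathbb{Q}$, let $v \in C_{\mathrm{lin}}(\mathbb{R}_+,\mathbb{R}_+)$, and fix $i \leq j$. Suppose $g^{(N)} : \mathbb{R}_+ \to \mathbb{R}_+$ are $1$-Lipschitz with $g^{(N)}(0)=0$, satisfy $g^{(N)}(S_i) = \mathbb{E}_{\mathbb{Q}^{(N)}}[v(S_j) \mid S_i]$ $\mathbb{Q}^{(N)}$-a.s., and converge uniformly on compacts to $g$. Then $\mathbb{Q} \in \mathcal{M}(\mu_1,\dots,\mu_n)$ and $g(S_i) = \mathbb{E}_{\mathbb{Q}}[v(S_j) \mid S_i]$ $\mathbb{Q}$-a.s. -/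

import Mathlib

open MeasureTheory Filter
open BoundedContinuousFunction
open scoped NNReal ENNReal



lemma tendsto_of_approx {a : ℕ → ℝ} {L : ℝ}
    (h : ∀ ε : ℝ, 0 < ε → ∃ (b : ℕ → ℝ) (Lb : ℝ), Tendsto b atTop (nhds Lb) ∧
      (∀ᶠ m in atTop, |a m - b m| ≤ ε) ∧ |L - Lb| ≤ ε) :
    Tendsto a atTop (nhds L) := by
  rw [Metric.tendsto_atTop]
  intro ε hε
  obtain ⟨b, Lb, hb, hab, hLb⟩ := h (ε / 4) (by linarith)
  have hb' : ∀ᶠ m in atTop, |b m - Lb| < ε / 4 := by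
    have := Metric.tendsto_atTop.mp hb (ε / 4) (by linarith)
    obtain ⟨N, hN⟩ := this
    exact eventually_atTop.2 ⟨N, fun m hm => by simpa [Real.dist_eq] using hN m hm⟩
  obtain ⟨N, hN⟩ := eventually_atTop.1 (hab.and hb')
  refine ⟨N, fun m hm => ?_⟩
  obtain ⟨h1, h2⟩ := hN m hm
  have : |a m - L| ≤ |a m - b m| + |b m - Lb| + |Lb - L| := by
    have := abs_sub_le (a m) (b m) L
    have := abs_sub_le (b m) Lb L
    linarith [abs_sub_le (a m) (b m) (Lb), abs_sub_le (b m) Lb L]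
  rw [Real.dist_eq]
  have h3 : |Lb - L| ≤ ε / 4 := by rwa [abs_sub_comm]
  linarith

lemma integrable_of_lin_growth {μl : Measure ℝ} [IsProbabilityMeasure μl]
    (hmom : Integrable (fun x => x) μl) (hpos : ∀ᵐ x ∂μl, 0 ≤ x)
    {w : ℝ → ℝ} (hwc : Continuous w) (hw0 : ∀ x, 0 ≤ w x)
    {C : ℝ} (hwlin : ∀ x, 0 ≤ x → w x ≤ C * (1 + x)) : Integrable w μl := by
  have hint : Integrable (fun x => |C| * (1 + |x|)) μl :=
    (((integrable_const (1:ℝ)).add hmom.abs)).const_mul _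
  refine Integrable.mono hint hwc.aestronglyMeasurable ?_
  filter_upwards [hpos] with x hx
  have h1 : w x ≤ C * (1 + x) := hwlin x hx
  have h2 : C * (1 + x) ≤ |C| * (1 + |x|) := by
    have : C ≤ |C| := le_abs_self C
    have hx1 : (0:ℝ) ≤ 1 + x := by linarith
    calc C * (1 + x) ≤ |C| * (1 + x) := mul_le_mul_of_nonneg_right this hx1
      _ ≤ |C| * (1 + |x|) := by
          have := le_abs_self x
          nlinarith [abs_nonneg C]
  rw [Real.norm_eq_abs, Real.norm_eq_abs, abs_of_nonneg (hw0 x)]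
  calc w x ≤ C * (1 + x) := h1
    _ ≤ |C| * (1 + |x|) := h2
    _ ≤ |(|C| * (1 + |x|))| := le_abs_self _

lemma tail_small {μl : Measure ℝ} [IsProbabilityMeasure μl]
    (hmom : Integrable (fun x => x) μl) (hpos : ∀ᵐ x ∂μl, 0 ≤ x)
    {w : ℝ → ℝ} (hwc : Continuous w) (hw0 : ∀ x, 0 ≤ w x)
    {C : ℝ} (hwlin : ∀ x, 0 ≤ x → w x ≤ C * (1 + x))
    {ε : ℝ} (hε : 0 < ε) :
    ∃ K : ℝ, 0 ≤ K ∧ ∫ x, max (w x - K) 0 ∂μl < ε := by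
  have hwint : Integrable w μl := integrable_of_lin_growth hmom hpos hwc hw0 hwlin
  have hmeas : ∀ K : ℝ, AEStronglyMeasurable (fun x => max (w x - K) 0) μl := fun K =>
    ((hwc.sub continuous_const).max continuous_const).aestronglyMeasurable
  have hbound : ∀ (K : ℕ), ∀ᵐ x ∂μl, ‖max (w x - K) 0‖ ≤ w x := by
    intro K
    filter_upwards with x
    rw [Real.norm_eq_abs, abs_of_nonneg (le_max_right _ _)]
    rcases le_or_gt (w x - K) 0 with h | h
    · simpa [max_eq_right h] using hw0 x
    · rw [max_eq_left h.le]; have : (0:ℝ) ≤ K := Nat.cast_nonneg K; linarith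
  have hptw : ∀ᵐ x ∂μl, Tendsto (fun K : ℕ => max (w x - K) 0) atTop (nhds 0) := by
    filter_upwards with x
    have : ∀ᶠ K : ℕ in atTop, max (w x - K) 0 = 0 := by
      obtain ⟨K₀, hK₀⟩ := exists_nat_ge (w x)
      refine eventually_atTop.2 ⟨K₀, fun K hK => ?_⟩
      have : w x - K ≤ 0 := by
        have : (K₀ : ℝ) ≤ K := Nat.cast_le.2 hK
        linarith
      simp [max_eq_right this]
    exact Tendsto.congr' (this.mono fun K hK => hK.symm) tendsto_const_nhds
  have := tendsto_integral_of_dominated_convergence w (fun K => hmeas K) hwint hbound hptw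
  rw [integral_zero] at this
  have := (Metric.tendsto_atTop.mp this) ε hε
  obtain ⟨K, hK⟩ := this
  refine ⟨K, Nat.cast_nonneg K, ?_⟩
  have := hK K le_rfl
  rw [Real.dist_eq, sub_zero] at this
  calc ∫ x, max (w x - (K:ℝ)) 0 ∂μl ≤ |∫ x, max (w x - (K:ℝ)) 0 ∂μl| := le_abs_self _
    _ < ε := this


lemma integral_mul_eq_of_condexp {α : Type*} [msp : MeasurableSpace α] {ν : Measure α}
    [IsProbabilityMeasure ν] {m : MeasurableSpace α} (hm : m ≤ msp)
    {f φ h : α → ℝ} (hf : Integrable f ν) (_hφ : Integrable φ ν)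
    (hh : StronglyMeasurable[m] h) {c : ℝ} (hc : ∀ x, ‖h x‖ ≤ c)
    (hce : ν[f|m] =ᵐ[ν] φ) :
    ∫ s, h s * f s ∂ν = ∫ s, h s * φ s ∂ν := by
  have h1 : ν[h * f|m] =ᵐ[ν] h * (ν[f|m]) :=
    condExp_stronglyMeasurable_mul_of_bound hm hh hf c (Filter.Eventually.of_forall hc)
  have h2 : ∫ s, h s * f s ∂ν = ∫ s, (ν[h * f|m]) s ∂ν := (integral_condExp hm).symm
  rw [h2, integral_congr_ae h1]
  refine integral_congr_ae ?_
  filter_upwards [hce] with s hs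
  simp only [Pi.mul_apply, hs]

lemma measure_ext_of_bcf {E : Type*} [MeasurableSpace E] [TopologicalSpace E]
    [HasOuterApproxClosed E] [BorelSpace E] {ν₁ ν₂ : Measure E}
    [IsFiniteMeasure ν₁] [IsFiniteMeasure ν₂]
    (h : ∀ f : E →ᵇ ℝ, (∀ x, 0 ≤ f x) → ∫ x, f x ∂ν₁ = ∫ x, f x ∂ν₂) : ν₁ = ν₂ := by
  apply ext_of_forall_lintegral_eq_of_IsFiniteMeasure
  intro f
  have hcont : Continuous fun x => ((f x : ℝ)) := NNReal.continuous_coe.comp f.continuous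
  set fR : E →ᵇ ℝ := BoundedContinuousFunction.ofNormedAddCommGroup
    (fun x => (f x : ℝ)) hcont (nndist 0 f) (fun x => by
      rw [Real.norm_eq_abs, abs_of_nonneg (f x).coe_nonneg]
      exact_mod_cast f.apply_le_nndist_zero x) with hfR
  have hpos : ∀ x, 0 ≤ fR x := fun x => (f x).coe_nonneg
  have heq := h fR hpos
  have h₁ := f.toReal_lintegral_coe_eq_integral ν₁
  have h₂ := f.toReal_lintegral_coe_eq_integral ν₂
  have hR₁ : ∫ x, fR x ∂ν₁ = ∫ x, (f x : ℝ) ∂ν₁ := rfl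
  have hR₂ : ∫ x, fR x ∂ν₂ = ∫ x, (f x : ℝ) ∂ν₂ := rfl
  have hfin₁ : ∫⁻ x, (f x : ℝ≥0∞) ∂ν₁ ≠ ∞ := (f.lintegral_lt_top_of_nnreal ν₁).ne
  have hfin₂ : ∫⁻ x, (f x : ℝ≥0∞) ∂ν₂ ≠ ∞ := (f.lintegral_lt_top_of_nnreal ν₂).ne
  rw [← ENNReal.toReal_eq_toReal_iff' hfin₁ hfin₂, h₁, h₂, ← hR₁, ← hR₂, heq]

lemma setIntegral_eq_of_bcf_eq {Ω E : Type*} [MeasurableSpace Ω]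
    [MeasurableSpace E] [TopologicalSpace E] [HasOuterApproxClosed E] [BorelSpace E]
    {Q : Measure Ω} [IsProbabilityMeasure Q]
    {π : Ω → E} (hπ : Measurable π)
    {w₁ w₂ : Ω → ℝ} (hw₁m : Measurable w₁) (hw₂m : Measurable w₂)
    (hw₁0 : ∀ s, 0 ≤ w₁ s) (hw₂0 : ∀ s, 0 ≤ w₂ s)
    (hw₁i : Integrable w₁ Q) (hw₂i : Integrable w₂ Q)
    (hbcf : ∀ f : E →ᵇ ℝ, (∀ x, 0 ≤ f x) →
      ∫ s, f (π s) * w₁ s ∂Q = ∫ s, f (π s) * w₂ s ∂Q)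
    {B : Set E} (hB : MeasurableSet B) :
    ∫ s in π ⁻¹' B, w₁ s ∂Q = ∫ s in π ⁻¹' B, w₂ s ∂Q := by
  -- weighted measures
  set d₁ : Ω → ℝ≥0 := fun s => Real.toNNReal (w₁ s) with hd₁
  set d₂ : Ω → ℝ≥0 := fun s => Real.toNNReal (w₂ s) with hd₂
  have hd₁m : Measurable d₁ := measurable_real_toNNReal.comp hw₁m
  have hd₂m : Measurable d₂ := measurable_real_toNNReal.comp hw₂m
  set ν₁ : Measure E := (Q.withDensity (fun s => (d₁ s : ℝ≥0∞))).map π with hν₁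
  set ν₂ : Measure E := (Q.withDensity (fun s => (d₂ s : ℝ≥0∞))).map π with hν₂
  have hfin : ∀ (w : Ω → ℝ), Measurable w → Integrable w Q →
      IsFiniteMeasure (Q.withDensity (fun s => ((Real.toNNReal (w s) : ℝ≥0) : ℝ≥0∞))) := by
    intro w hwm hwi
    constructor
    rw [withDensity_apply _ MeasurableSet.univ]
    have : ∫⁻ s in Set.univ, ((Real.toNNReal (w s) : ℝ≥0) : ℝ≥0∞) ∂Q
        ≤ ∫⁻ s, (‖w s‖₊ : ℝ≥0∞) ∂Q := by
      rw [Measure.restrict_univ]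
      refine lintegral_mono fun s => ?_
      show ENNReal.ofReal (w s) ≤ (‖w s‖₊ : ℝ≥0∞)
      rw [← enorm_eq_nnnorm, ← ofReal_norm]
      exact ENNReal.ofReal_le_ofReal (le_abs_self _)
    exact lt_of_le_of_lt this hwi.2
  haveI := hfin w₁ hw₁m hw₁i
  haveI := hfin w₂ hw₂m hw₂i
  haveI : IsFiniteMeasure ν₁ := by rw [hν₁]; infer_instance
  haveI : IsFiniteMeasure ν₂ := by rw [hν₂]; infer_instance
  have hint : ∀ (w : Ω → ℝ), Measurable w → (∀ s, 0 ≤ w s) → ∀ f : E →ᵇ ℝ,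
      ∫ x, f x ∂((Q.withDensity (fun s => ((Real.toNNReal (w s) : ℝ≥0) : ℝ≥0∞))).map π)
        = ∫ s, f (π s) * w s ∂Q := by
    intro w hwm hw0 f
    rw [integral_map hπ.aemeasurable f.continuous.aestronglyMeasurable]
    have f_meas : Measurable (fun s => Real.toNNReal (w s)) :=
      measurable_real_toNNReal.comp hwm
    rw [integral_withDensity_eq_integral_smul f_meas]
    refine integral_congr_ae (Filter.Eventually.of_forall fun s => ?_)
    simp only [NNReal.smul_def, smul_eq_mul, Real.coe_toNNReal _ (hw0 s)]
    ring
  have hνeq : ν₁ = ν₂ := by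
    apply measure_ext_of_bcf
    intro f hf
    rw [hν₁, hν₂, hint w₁ hw₁m hw₁0 f, hint w₂ hw₂m hw₂0 f]
    exact hbcf f hf
  have hset : ∀ (w : Ω → ℝ), Measurable w → (∀ s, 0 ≤ w s) →
      ∫ s in π ⁻¹' B, w s ∂Q
        = (((Q.withDensity (fun s => ((Real.toNNReal (w s) : ℝ≥0) : ℝ≥0∞))).map π) B).toReal := by
    intro w hwm hw0
    rw [Measure.map_apply hπ hB, withDensity_apply _ (hπ hB)]
    rw [integral_eq_lintegral_of_nonneg_ae (Filter.Eventually.of_forall hw0)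
      hwm.aestronglyMeasurable.restrict]
    rfl
  rw [hset w₁ hw₁m hw₁0, hset w₂ hw₂m hw₂0]
  have : ν₁ B = ν₂ B := by rw [hνeq]
  rw [hν₁, hν₂] at this
  rw [this]
lemma integral_trunc_err {Ω : Type*} [MeasurableSpace Ω] [TopologicalSpace Ω]
    [OpensMeasurableSpace Ω]
    {X : Ω → ℝ} (hX : Measurable X)
    {μl : Measure ℝ} [IsProbabilityMeasure μl]
    {w : ℝ → ℝ} (hwc : Continuous w) (hw0 : ∀ x, 0 ≤ w x)
    (h : Ω →ᵇ ℝ) (K : ℝ) (hK0 : 0 ≤ K)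
    (ν : Measure Ω) (hνp : IsProbabilityMeasure ν) (hνm : ν.map X = μl)
    (hwint : Integrable w μl) :
    |∫ s, h s * w (X s) ∂ν - ∫ s, h s * min (w (X s)) K ∂ν|
      ≤ ‖h‖ * ∫ x, max (w x - K) 0 ∂μl := by
  haveI := hνp
  have hwmeas : Measurable fun s => w (X s) := hwc.measurable.comp hX
  have hwXint : Integrable (fun s => w (X s)) ν := by
    have := (integrable_map_measure (f := X) (g := w)
      (by rw [hνm]; exact hwc.aestronglyMeasurable) hX.aemeasurable).mp
      (by rw [hνm]; exact hwint)
    exact this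
  have hhb : ∃ c, ∀ s, ‖h s‖ ≤ c := ⟨‖h‖, fun s => h.norm_coe_le_norm s⟩
  have hhm : AEStronglyMeasurable (fun s => h s) ν := h.continuous.measurable.aestronglyMeasurable
  have hmaxint : Integrable (fun s => max (w (X s) - K) 0) ν := by
    refine Integrable.mono hwXint
      ((hwmeas.sub measurable_const).max measurable_const).aestronglyMeasurable ?_
    refine Filter.Eventually.of_forall fun s => ?_
    rw [Real.norm_eq_abs, Real.norm_eq_abs, abs_of_nonneg (le_max_right _ _),
      abs_of_nonneg (hw0 _)]
    rcases le_total (w (X s) - K) 0 with hc | hc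
    · rw [max_eq_right hc]; exact hw0 _
    · rw [max_eq_left hc]; linarith
  have hmin_int : Integrable (fun s => h s * min (w (X s)) K) ν := by
    refine Integrable.bdd_mul ?_ hhm (Filter.Eventually.of_forall hhb.choose_spec)
    refine Integrable.mono hwXint (hwmeas.min measurable_const).aestronglyMeasurable ?_
    refine Filter.Eventually.of_forall fun s => ?_
    rw [Real.norm_eq_abs, Real.norm_eq_abs, abs_of_nonneg (le_min (hw0 _) hK0),
      abs_of_nonneg (hw0 _)]
    exact min_le_left _ _
  have hmul_int : Integrable (fun s => h s * w (X s)) ν := hwXint.bdd_mul hhm (Filter.Eventually.of_forall hhb.choose_spec)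
  rw [← integral_sub hmul_int hmin_int]
  have heq : ∀ s, h s * w (X s) - h s * min (w (X s)) K = h s * max (w (X s) - K) 0 := by
    intro s
    rcases le_total (w (X s)) K with hc | hc
    · rw [min_eq_left hc, max_eq_right (by linarith)]; ring
    · rw [min_eq_right hc, max_eq_left (by linarith)]; ring
  calc |∫ s, (h s * w (X s) - h s * min (w (X s)) K) ∂ν|
      ≤ ∫ s, ‖h s * w (X s) - h s * min (w (X s)) K‖ ∂ν := by
        rw [← Real.norm_eq_abs]; exact norm_integral_le_integral_norm _
    _ ≤ ∫ s, ‖h‖ * max (w (X s) - K) 0 ∂ν := by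
        refine integral_mono_of_nonneg (Filter.Eventually.of_forall fun s => norm_nonneg _)
          (hmaxint.const_mul _) (Filter.Eventually.of_forall fun s => ?_)
        show ‖h s * w (X s) - h s * min (w (X s)) K‖ ≤ ‖h‖ * max (w (X s) - K) 0
        rw [heq s, norm_mul, Real.norm_eq_abs (max _ _), abs_of_nonneg (le_max_right _ _)]
        exact mul_le_mul_of_nonneg_right (h.norm_coe_le_norm s) (le_max_right _ _)
    _ = ‖h‖ * ∫ s, max (w (X s) - K) 0 ∂ν := integral_const_mul _ _
    _ = ‖h‖ * ∫ x, max (w x - K) 0 ∂μl := by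
        rw [← hνm, integral_map (f := fun x : ℝ => max (w x - K) 0) hX.aemeasurable
          (((hwc.sub continuous_const).max continuous_const)).aestronglyMeasurable]

lemma tendsto_integral_mul {Ω : Type*} [MeasurableSpace Ω] [TopologicalSpace Ω]
    [OpensMeasurableSpace Ω]
    {X : Ω → ℝ} (hX : Measurable X) (hXc : Continuous X)
    {P : ℕ → Measure Ω} (hP : ∀ m, IsProbabilityMeasure (P m))
    {Q : Measure Ω} [IsProbabilityMeasure Q]
    {μl : Measure ℝ} [IsProbabilityMeasure μl]
    (hmom : Integrable (fun x => x) μl) (hpos : ∀ᵐ x ∂μl, 0 ≤ x)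
    (hPmarg : ∀ m, (P m).map X = μl) (hQmarg : Q.map X = μl)
    (hweak : ∀ f : Ω →ᵇ ℝ, Tendsto (fun m => ∫ s, f s ∂(P m)) atTop (nhds (∫ s, f s ∂Q)))
    {w : ℝ → ℝ} (hwc : Continuous w) (hw0 : ∀ x, 0 ≤ w x)
    {C : ℝ} (hwlin : ∀ x, 0 ≤ x → w x ≤ C * (1 + x))
    (h : Ω →ᵇ ℝ) :
    Tendsto (fun m => ∫ s, h s * w (X s) ∂(P m)) atTop (nhds (∫ s, h s * w (X s) ∂Q)) := by
  have hwint : Integrable w μl := integrable_of_lin_growth hmom hpos hwc hw0 hwlin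
  apply tendsto_of_approx
  intro ε hε
  have hpos1 : (0:ℝ) < ‖h‖ + 1 := by positivity
  have hεh : 0 < ε / (‖h‖ + 1) := div_pos hε hpos1
  obtain ⟨K, hK0, hKε⟩ := tail_small hmom hpos hwc hw0 hwlin hεh
  have hbnd : ∀ s, ‖h s * min (w (X s)) K‖ ≤ ‖h‖ * K := by
    intro s
    rw [norm_mul]
    refine mul_le_mul (h.norm_coe_le_norm s) ?_ (norm_nonneg _) (norm_nonneg _)
    rw [Real.norm_eq_abs, abs_of_nonneg (le_min (hw0 _) hK0)]
    exact min_le_right _ _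
  set hK : Ω →ᵇ ℝ := BoundedContinuousFunction.ofNormedAddCommGroup
    (fun s => h s * min (w (X s)) K)
    (h.continuous.mul (((hwc.comp hXc)).min continuous_const)) (‖h‖ * K) hbnd with hKdef
  have hKcoe : ∀ s, hK s = h s * min (w (X s)) K := fun s => rfl
  have hfinal : ‖h‖ * ∫ x, max (w x - K) 0 ∂μl ≤ ε := by
    have h1 : ‖h‖ * ∫ x, max (w x - K) 0 ∂μl ≤ ‖h‖ * (ε / (‖h‖ + 1)) :=
      mul_le_mul_of_nonneg_left hKε.le (norm_nonneg h)
    have h2 : ‖h‖ * (ε / (‖h‖ + 1)) ≤ ε := by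
      calc ‖h‖ * (ε / (‖h‖ + 1)) = (‖h‖ / (‖h‖ + 1)) * ε := by ring
        _ ≤ 1 * ε := mul_le_mul_of_nonneg_right
            ((div_le_one hpos1).2 (by linarith [norm_nonneg h])) hε.le
        _ = ε := one_mul ε
    linarith
  refine ⟨fun m => ∫ s, hK s ∂(P m), ∫ s, hK s ∂Q, hweak hK, ?_, ?_⟩
  · refine Filter.Eventually.of_forall fun m => ?_
    have := integral_trunc_err hX hwc hw0 h K hK0 (P m) (hP m) (hPmarg m) hwint
    exact le_trans this hfinal
  · have := integral_trunc_err hX hwc hw0 h K hK0 Q inferInstance hQmarg hwint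
    exact le_trans this hfinal


/-- Closure property of Markovian pricing rules (Remark 2.12): the weak limit of
martingale measures with fixed marginals is again such a measure, and the locally
uniform limit of the associated 1-Lipschitz conditional pricing functions is a version
of the conditional expectation under the limit measure. -/
theorem markov_pricing_rule_closed
    {n : ℕ}
    (μ : Fin n → Measure ℝ) (hμprob : ∀ i, IsProbabilityMeasure (μ i))
    (hμmom : ∀ i, Integrable (fun x => x) (μ i))
    (ℱ : Fin n → MeasurableSpace (Fin n → ℝ))
    (hℱ : ∀ i, ℱ i = MeasurableSpace.comap
      (fun (s : Fin n → ℝ) (l : {l : Fin n // l ≤ i}) => s l.1) inferInstance)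
    (QN : ℕ → Measure (Fin n → ℝ)) (hQNprob : ∀ m, IsProbabilityMeasure (QN m))
    (hQNpos : ∀ m, ∀ᵐ s ∂(QN m), ∀ l, 0 ≤ s l)
    (hQNmart : ∀ m, ∀ i j : Fin n, i ≤ j →
      ((QN m)[fun s => s j|ℱ i]) =ᵐ[QN m] fun s => s i)
    (hQNmarg : ∀ m, ∀ i : Fin n, (QN m).map (fun s => s i) = μ i)
    (Q : Measure (Fin n → ℝ)) [IsProbabilityMeasure Q]
    -- weak convergence of `QN` to `Q`
    (hweak : ∀ f : BoundedContinuousFunction (Fin n → ℝ) ℝ,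
      Tendsto (fun m => ∫ s, f s ∂(QN m)) atTop (nhds (∫ s, f s ∂Q)))
    (v : ℝ → ℝ) (hvcont : Continuous v) (hv0 : ∀ x, 0 ≤ v x)
    (hvlin : ∃ C : ℝ, ∀ x : ℝ, 0 ≤ x → v x ≤ C * (1 + x))
    (i j : Fin n) (hij : i ≤ j)
    (gN : ℕ → ℝ → ℝ) (g : ℝ → ℝ)
    (hgNlip : ∀ m, LipschitzWith 1 (gN m)) (hgN0 : ∀ m, gN m 0 = 0)
    (hgNpos : ∀ m x, 0 ≤ gN m x)
    -- `gN m (Sᵢ)` is a version of the conditional expectation given `Sᵢ` under `QN m`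
    (hgNce : ∀ m,
      ((QN m)[fun s => v (s j)|MeasurableSpace.comap (fun s : Fin n → ℝ => s i)
        inferInstance]) =ᵐ[QN m] fun s => gN m (s i))
    -- uniform convergence on compact sets
    (hgconv : ∀ K : Set ℝ, IsCompact K → TendstoUniformlyOn (fun m => gN m) g atTop K) :
    -- the limit measure is again a calibrated martingale measure
    ((∀ i' j' : Fin n, i' ≤ j' → (Q[fun s => s j'|ℱ i']) =ᵐ[Q] fun s => s i') ∧
      (∀ i' : Fin n, Q.map (fun s => s i') = μ i')) ∧
    -- and `g(Sᵢ)` is a version of the conditional expectation under `Q`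
    (Q[fun s => v (s j)|MeasurableSpace.comap (fun s : Fin n → ℝ => s i) inferInstance])
      =ᵐ[Q] fun s => g (s i) := by
  have hπm : ∀ l : Fin n, Measurable fun s : Fin n → ℝ => s l := fun l => measurable_pi_apply l
  have hπc : ∀ l : Fin n, Continuous fun s : Fin n → ℝ => s l := fun l => continuous_apply l
  -- Step 0 : Q-a.s. nonnegativity of coordinates
  have hQpos : ∀ᵐ s ∂Q, ∀ l, 0 ≤ s l := by
    set F : Set (Fin n → ℝ) := {s | ∀ l, 0 ≤ s l} with hF
    have hFclosed : IsClosed F := by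
      have : F = ⋂ l, (fun s : Fin n → ℝ => s l) ⁻¹' (Set.Ici 0) := by
        ext s; simp [hF, Set.mem_iInter, Set.mem_Ici]
      rw [this]
      exact isClosed_iInter fun l => isClosed_Ici.preimage (hπc l)
    have hQN_F : ∀ m, QN m F = 1 := by
      intro m
      haveI := hQNprob m
      refine (prob_compl_eq_zero_iff hFclosed.measurableSet).mp ?_
      have := hQNpos m
      rw [ae_iff] at this
      convert this using 2; ext s; simp [hF]
    let P' : ℕ → ProbabilityMeasure (Fin n → ℝ) := fun m => ⟨QN m, hQNprob m⟩
    let Q' : ProbabilityMeasure (Fin n → ℝ) := ⟨Q, inferInstance⟩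
    have htend : Tendsto P' atTop (nhds Q') :=
      ProbabilityMeasure.tendsto_iff_forall_integral_tendsto.mpr hweak
    have hlim := ProbabilityMeasure.limsup_measure_closed_le_of_tendsto htend hFclosed
    have hone : (Filter.limsup (fun m => (P' m : Measure (Fin n → ℝ)) F) atTop) = 1 := by
      have : (fun m => (P' m : Measure (Fin n → ℝ)) F) = fun _ => (1 : ℝ≥0∞) := by
        funext m; exact hQN_F m
      rw [this, Filter.limsup_const]
    rw [hone] at hlim
    have hQF : Q F = 1 := le_antisymm prob_le_one hlim
    have : Q Fᶜ = 0 := (prob_compl_eq_zero_iff hFclosed.measurableSet).mpr hQF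
    rw [ae_iff]
    convert this using 2; ext s; simp [hF]
  -- Step 1 : marginals of Q
  have hQmarg : ∀ l : Fin n, Q.map (fun s => s l) = μ l := by
    intro l
    haveI := hμprob l
    haveI : IsProbabilityMeasure (Q.map (fun s : Fin n → ℝ => s l)) :=
      Measure.isProbabilityMeasure_map (hπm l).aemeasurable
    refine measure_ext_of_bcf fun f _ => ?_
    have h2 : ∀ (ν : Measure (Fin n → ℝ)),
        ∫ s, (f.compContinuous ⟨fun s : Fin n → ℝ => s l, hπc l⟩) s ∂ν
          = ∫ x, f x ∂(ν.map (fun s => s l)) := fun ν =>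
      (integral_map (hπm l).aemeasurable f.continuous.aestronglyMeasurable).symm
    have h1 := hweak (f.compContinuous ⟨fun s : Fin n → ℝ => s l, hπc l⟩)
    simp only [h2] at h1
    simp only [hQNmarg _ l] at h1
    exact tendsto_nhds_unique h1 tendsto_const_nhds
  -- integrability of coordinates
  have hcoord_int : ∀ (ν : Measure (Fin n → ℝ)),
      (∀ l', ν.map (fun s => s l') = μ l') → ∀ l, Integrable (fun s => s l) ν := by
    intro ν hν l
    have := (integrable_map_measure (f := fun s : Fin n → ℝ => s l) (g := fun x : ℝ => x)
      (by rw [hν l]; exact aestronglyMeasurable_id) (hπm l).aemeasurable).mp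
      (by rw [hν l]; exact hμmom l)
    exact this
  -- marginal positivity
  have hμpos : ∀ l : Fin n, ∀ᵐ x ∂(μ l), 0 ≤ x := by
    intro l
    rw [← hQNmarg 0 l]
    rw [ae_map_iff (hπm l).aemeasurable measurableSet_Ici]
    filter_upwards [hQNpos 0] with s hs using hs l
  -- a.e. bound for max
  have hmax_int : ∀ (ν : Measure (Fin n → ℝ)),
      (∀ l', ν.map (fun s => s l') = μ l') → ∀ l,
      Integrable (fun s => max (s l) 0) ν := fun ν hν l => (hcoord_int ν hν l).pos_part
  refine ⟨⟨?_, hQmarg⟩, ?_⟩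
  · -- martingale property
    intro i' j' hij'
    set π : (Fin n → ℝ) → ({l : Fin n // l ≤ i'} → ℝ) := fun s l => s l.1 with hπ
    have hπmeas : Measurable π := measurable_pi_lambda _ fun l => measurable_pi_apply l.1
    have hπcont : Continuous π := continuous_pi fun l => continuous_apply l.1
    have hm : ℱ i' ≤ MeasurableSpace.pi := by
      rw [hℱ i']; exact hπmeas.comap_le
    haveI : SigmaFinite (Q.trim hm) := by infer_instance
    refine (ae_eq_condExp_of_forall_setIntegral_eq hm (hcoord_int Q hQmarg j')
      (fun A _ _ => (hcoord_int Q hQmarg i').integrableOn) ?_ ?_).symm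
    · -- set integrals agree
      intro A hA _
      rw [hℱ i'] at hA
      rw [MeasurableSpace.measurableSet_comap] at hA
      obtain ⟨B, hB, hBA⟩ := hA
      subst hBA
      have hae : ∀ (l : Fin n), ∫ s in π ⁻¹' B, s l ∂Q = ∫ s in π ⁻¹' B, max (s l) 0 ∂Q := by
        intro l
        refine integral_congr_ae ?_
        filter_upwards [ae_restrict_of_ae hQpos] with s hs
        rw [max_eq_left (hs l)]
      rw [hae i', hae j']
      refine setIntegral_eq_of_bcf_eq hπmeas ((hπm i').max measurable_const)
        ((hπm j').max measurable_const) (fun s => le_max_right _ _) (fun s => le_max_right _ _)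
        (hmax_int Q hQmarg i') (hmax_int Q hQmarg j') ?_ hB
      intro f _
      set h : BoundedContinuousFunction (Fin n → ℝ) ℝ := f.compContinuous ⟨π, hπcont⟩ with hhdef
      have hsm : StronglyMeasurable[ℱ i'] (fun s => h s) := by
        rw [hℱ i']
        exact (f.continuous.measurable.comp (Measurable.of_comap_le le_rfl)).stronglyMeasurable
      have hAm : ∀ m, ∫ s, h s * max (s j') 0 ∂(QN m) = ∫ s, h s * max (s i') 0 ∂(QN m) := by
        intro m
        haveI := hQNprob m
        have h1 : ∫ s, h s * max (s j') 0 ∂(QN m) = ∫ s, h s * s j' ∂(QN m) := by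
          refine integral_congr_ae ?_
          filter_upwards [hQNpos m] with s hs
          rw [max_eq_left (hs j')]
        have h2 : ∫ s, h s * max (s i') 0 ∂(QN m) = ∫ s, h s * s i' ∂(QN m) := by
          refine integral_congr_ae ?_
          filter_upwards [hQNpos m] with s hs
          rw [max_eq_left (hs i')]
        rw [h1, h2]
        exact integral_mul_eq_of_condexp hm (hcoord_int (QN m) (hQNmarg m) j')
          (hcoord_int (QN m) (hQNmarg m) i') hsm (fun s => h.norm_coe_le_norm s)
          (hQNmart m i' j' hij')
      have hwc : Continuous (fun x : ℝ => max x 0) := continuous_id.max continuous_const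
      have hw0 : ∀ x : ℝ, 0 ≤ max x 0 := fun x => le_max_right _ _
      have hwlin : ∀ x : ℝ, 0 ≤ x → max x 0 ≤ 1 * (1 + x) := by
        intro x hx; rw [max_eq_left hx]; linarith
      haveI := hμprob j'
      haveI := hμprob i'
      have hTj := tendsto_integral_mul (hπm j') (hπc j') hQNprob (hμmom j') (hμpos j')
        (fun m => hQNmarg m j') (hQmarg j') hweak hwc hw0 hwlin h
      have hTi := tendsto_integral_mul (hπm i') (hπc i') hQNprob (hμmom i') (hμpos i')
        (fun m => hQNmarg m i') (hQmarg i') hweak hwc hw0 hwlin h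
      have hTj' : Tendsto (fun m => ∫ s, h s * max (s i') 0 ∂(QN m)) atTop
          (nhds (∫ s, h s * max (s j') 0 ∂Q)) := by
        refine hTj.congr fun m => hAm m
      have := tendsto_nhds_unique hTj' hTi
      exact this.symm
    · -- strong measurability
      have : Measurable[ℱ i'] (fun s : Fin n → ℝ => s i') := by
        rw [hℱ i']
        have h1 : Measurable[MeasurableSpace.comap
            (fun (s : Fin n → ℝ) (l : {l : Fin n // l ≤ i'}) => s l.1) inferInstance]
            (fun (s : Fin n → ℝ) (l : {l : Fin n // l ≤ i'}) => s l.1) :=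
          Measurable.of_comap_le le_rfl
        exact (measurable_pi_apply (⟨i', le_rfl⟩ : {l : Fin n // l ≤ i'})).comp h1
      exact this.stronglyMeasurable.aestronglyMeasurable
  · -- conditional expectation of v
    obtain ⟨C, hC⟩ := hvlin
    have hm' : MeasurableSpace.comap (fun s : Fin n → ℝ => s i) inferInstance
        ≤ MeasurableSpace.pi := (hπm i).comap_le
    haveI : SigmaFinite (Q.trim hm') := by infer_instance
    -- properties of g
    have hgNlim : ∀ x, Tendsto (fun m => gN m x) atTop (nhds (g x)) := fun x =>
      (hgconv {x} isCompact_singleton).tendsto_at (Set.mem_singleton x)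
    have hglip : LipschitzWith 1 g := by
      rw [lipschitzWith_iff_dist_le_mul]
      intro x y
      refine le_of_tendsto ((hgNlim x).dist (hgNlim y))
        (Filter.Eventually.of_forall fun m => ?_)
      simpa using (lipschitzWith_iff_dist_le_mul.mp (hgNlip m)) x y
    have hg0 : g 0 = 0 := by
      refine tendsto_nhds_unique (hgNlim 0) ?_
      simp only [hgN0]
      exact tendsto_const_nhds
    have hgpos : ∀ x, 0 ≤ g x := fun x =>
      ge_of_tendsto' (hgNlim x) (fun m => hgNpos m x)
    have hgabs : ∀ x, |g x| ≤ |x| := by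
      intro x
      have := hglip.dist_le_mul x 0
      simpa [Real.dist_eq, hg0] using this
    have hglin : ∀ x, 0 ≤ x → g x ≤ 1 * (1 + x) := by
      intro x hx
      have h1 : g x ≤ |x| := le_trans (le_abs_self _) (hgabs x)
      rw [abs_of_nonneg hx] at h1
      linarith
    have hgcont : Continuous g := hglip.continuous
    have hgNabs : ∀ m x, |gN m x| ≤ |x| := by
      intro m x
      have := (hgNlip m).dist_le_mul x 0
      simpa [Real.dist_eq, hgN0 m] using this
    -- integrability of v ∘ coordinate
    have hv_int : ∀ (ν : Measure (Fin n → ℝ)), IsProbabilityMeasure ν →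
        (∀ l', ν.map (fun s => s l') = μ l') → (∀ᵐ s ∂ν, ∀ l, 0 ≤ s l) →
        Integrable (fun s => v (s j)) ν := by
      intro ν hp hmarg hpos'
      haveI := hp
      have hbase : Integrable (fun s : Fin n → ℝ => |C| * (1 + |s j|)) ν :=
        (((integrable_const (1:ℝ)).add (hcoord_int ν hmarg j).abs)).const_mul _
      refine hbase.mono' (hvcont.measurable.comp (hπm j)).aestronglyMeasurable ?_
      filter_upwards [hpos'] with s hs
      have h1 : v (s j) ≤ C * (1 + s j) := hC (s j) (hs j)
      rw [Real.norm_eq_abs, abs_of_nonneg (hv0 _)]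
      nlinarith [le_abs_self C, le_abs_self (s j), abs_nonneg C, abs_nonneg (s j), hs j,
        abs_nonneg (1 + s j)]
    -- integrability of lipschitz-type compositions
    have hlip_int : ∀ (ν : Measure (Fin n → ℝ)),
        (∀ l', ν.map (fun s => s l') = μ l') → ∀ (φ : ℝ → ℝ), Continuous φ →
        (∀ x, |φ x| ≤ |x|) → Integrable (fun s => φ (s i)) ν := by
      intro ν hmarg φ hφc hφb
      refine ((hcoord_int ν hmarg i).abs).mono' (hφc.measurable.comp (hπm i)).aestronglyMeasurable ?_
      refine Filter.Eventually.of_forall fun s => ?_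
      rw [Real.norm_eq_abs]
      exact le_trans (hφb (s i)) le_rfl
    refine (ae_eq_condExp_of_forall_setIntegral_eq hm'
      (hv_int Q inferInstance hQmarg hQpos)
      (fun A _ _ => (hlip_int Q hQmarg g hgcont hgabs).integrableOn) ?_ ?_).symm
    · -- set integrals agree
      intro A hA _
      rw [MeasurableSpace.measurableSet_comap] at hA
      obtain ⟨B, hB, hBA⟩ := hA
      subst hBA
      refine setIntegral_eq_of_bcf_eq (hπm i) (hgcont.measurable.comp (hπm i))
        (hvcont.measurable.comp (hπm j)) (fun s => hgpos _) (fun s => hv0 _)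
        (hlip_int Q hQmarg g hgcont hgabs) (hv_int Q inferInstance hQmarg hQpos) ?_ hB
      intro f _
      set h : BoundedContinuousFunction (Fin n → ℝ) ℝ :=
        f.compContinuous ⟨fun s : Fin n → ℝ => s i, hπc i⟩ with hhdef
      have hsm : StronglyMeasurable[MeasurableSpace.comap (fun s : Fin n → ℝ => s i)
          inferInstance] (fun s => h s) := by
        have h1 : Measurable[MeasurableSpace.comap (fun s : Fin n → ℝ => s i) inferInstance]
            (fun s : Fin n → ℝ => s i) := Measurable.of_comap_le le_rfl
        exact (f.continuous.measurable.comp h1).stronglyMeasurable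
      have hAm : ∀ m, ∫ s, h s * v (s j) ∂(QN m) = ∫ s, h s * gN m (s i) ∂(QN m) := by
        intro m
        haveI := hQNprob m
        exact integral_mul_eq_of_condexp hm'
          (hv_int (QN m) (hQNprob m) (hQNmarg m) (hQNpos m))
          (hlip_int (QN m) (hQNmarg m) (gN m) (hgNlip m).continuous (hgNabs m))
          hsm (fun s => h.norm_coe_le_norm s) (hgNce m)
      haveI := hμprob j
      haveI := hμprob i
      have hTv := tendsto_integral_mul (hπm j) (hπc j) hQNprob (hμmom j) (hμpos j)
        (fun m => hQNmarg m j) (hQmarg j) hweak hvcont hv0 hC h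
      have hTg0 := tendsto_integral_mul (hπm i) (hπc i) hQNprob (hμmom i) (hμpos i)
        (fun m => hQNmarg m i) (hQmarg i) hweak hgcont hgpos hglin h
      -- limit of the gN-integrals
      have hTg : Tendsto (fun m => ∫ s, h s * gN m (s i) ∂(QN m)) atTop
          (nhds (∫ s, h s * g (s i) ∂Q)) := by
        apply tendsto_of_approx
        intro ε hε
        have hpos1 : (0:ℝ) < ‖h‖ + 1 := by positivity
        set ε' : ℝ := ε / (3 * (‖h‖ + 1)) with hε'def
        have hε' : 0 < ε' := by positivity
        have hwc : Continuous (fun x : ℝ => max x 0) := continuous_id.max continuous_const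
        have hw0 : ∀ x : ℝ, 0 ≤ max x 0 := fun x => le_max_right _ _
        have hwlin : ∀ x : ℝ, 0 ≤ x → max x 0 ≤ 1 * (1 + x) := by
          intro x hx; rw [max_eq_left hx]; linarith
        obtain ⟨K, hK0, hKtail⟩ := tail_small (hμmom i) (hμpos i) hwc hw0 hwlin hε'
        have hKtail' : ∫ x, max (x - K) 0 ∂(μ i) < ε' := by
          have : ∫ x, max (x - K) 0 ∂(μ i) = ∫ x, max (max x 0 - K) 0 ∂(μ i) := by
            refine integral_congr_ae ?_
            filter_upwards [hμpos i] with x hx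
            rw [max_eq_left hx]
          rw [this]; exact hKtail
        have hunif := (Metric.tendstoUniformlyOn_iff.mp (hgconv (Set.Icc 0 K) isCompact_Icc))
          ε' hε'
        refine ⟨fun m => ∫ s, h s * g (s i) ∂(QN m), ∫ s, h s * g (s i) ∂Q, hTg0, ?_, ?_⟩
        · filter_upwards [hunif] with m hum
          haveI := hQNprob m
          -- pointwise estimate
          have hkey : ∀ x : ℝ, 0 ≤ x → |gN m x - g x| ≤ ε' + 2 * max (x - K) 0 := by
            intro x hx
            rcases le_total x K with hc | hc
            · have := hum x ⟨hx, hc⟩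
              rw [Real.dist_eq, abs_sub_comm] at this
              have h0 : (0:ℝ) ≤ max (x - K) 0 := le_max_right _ _
              linarith
            · have t1 : |gN m x - gN m K| ≤ x - K := by
                have := (hgNlip m).dist_le_mul x K
                rw [Real.dist_eq, Real.dist_eq] at this
                simpa [abs_of_nonneg (sub_nonneg.2 hc)] using this
              have t2 : |gN m K - g K| ≤ ε' := by
                have := hum K ⟨hK0, le_rfl⟩
                rw [Real.dist_eq, abs_sub_comm] at this
                linarith
              have t3 : |g K - g x| ≤ x - K := by
                have h4 := hglip.dist_le_mul K x
                rw [Real.dist_eq, Real.dist_eq, abs_sub_comm K x,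
                  abs_of_nonneg (sub_nonneg.2 hc)] at h4
                simpa using h4
              have hmax : max (x - K) 0 = x - K := max_eq_left (by linarith)
              calc |gN m x - g x| ≤ |gN m x - gN m K| + |gN m K - g K| + |g K - g x| := by
                    have := abs_sub_le (gN m x) (gN m K) (g x)
                    have := abs_sub_le (gN m K) (g K) (g x)
                    linarith [abs_sub_le (gN m x) (gN m K) (g K), abs_sub_le (gN m K) (g K) (g x)]
                _ ≤ (x - K) + ε' + (x - K) := by linarith
                _ = ε' + 2 * max (x - K) 0 := by rw [hmax]; ring
          have hgNi_int : Integrable (fun s => h s * gN m (s i)) (QN m) :=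
            (hlip_int (QN m) (hQNmarg m) (gN m) (hgNlip m).continuous (hgNabs m)).bdd_mul
              h.continuous.measurable.aestronglyMeasurable (Filter.Eventually.of_forall fun s => h.norm_coe_le_norm s)
          have hgi_int : Integrable (fun s => h s * g (s i)) (QN m) :=
            (hlip_int (QN m) (hQNmarg m) g hgcont hgabs).bdd_mul
              h.continuous.measurable.aestronglyMeasurable (Filter.Eventually.of_forall fun s => h.norm_coe_le_norm s)
          have hmaxK_int : Integrable (fun s => max (s i - K) 0) (QN m) := by
            refine ((hcoord_int (QN m) (hQNmarg m) i).abs).mono'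
              (((hπm i).sub measurable_const).max measurable_const).aestronglyMeasurable ?_
            refine Filter.Eventually.of_forall fun s => ?_
            rw [Real.norm_eq_abs, abs_of_nonneg (le_max_right _ _)]
            rcases le_total (s i - K) 0 with hc | hc
            · rw [max_eq_right hc]; exact abs_nonneg _
            · rw [max_eq_left hc]
              have := le_abs_self (s i)
              linarith
          have hbnd_int : Integrable (fun s => ‖h‖ * (ε' + 2 * max (s i - K) 0)) (QN m) :=
            (((integrable_const ε').add (hmaxK_int.const_mul 2))).const_mul _
          rw [← integral_sub hgNi_int hgi_int]
          calc |∫ s, (h s * gN m (s i) - h s * g (s i)) ∂(QN m)|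
              ≤ ∫ s, ‖h s * gN m (s i) - h s * g (s i)‖ ∂(QN m) := by
                rw [← Real.norm_eq_abs]; exact norm_integral_le_integral_norm _
            _ ≤ ∫ s, ‖h‖ * (ε' + 2 * max (s i - K) 0) ∂(QN m) := by
                refine integral_mono_of_nonneg
                  (Filter.Eventually.of_forall fun s => norm_nonneg _) hbnd_int ?_
                filter_upwards [hQNpos m] with s hs
                show ‖h s * gN m (s i) - h s * g (s i)‖ ≤ ‖h‖ * (ε' + 2 * max (s i - K) 0)
                have : h s * gN m (s i) - h s * g (s i) = h s * (gN m (s i) - g (s i)) := by ring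
                rw [this, norm_mul]
                have hb := hkey (s i) (hs i)
                have h1 : ‖gN m (s i) - g (s i)‖ ≤ ε' + 2 * max (s i - K) 0 := by
                  rw [Real.norm_eq_abs]; exact hb
                refine mul_le_mul (h.norm_coe_le_norm s) h1 (norm_nonneg _) (norm_nonneg _)
            _ = ‖h‖ * (ε' + 2 * ∫ s, max (s i - K) 0 ∂(QN m)) := by
                rw [integral_const_mul, integral_add (integrable_const ε')
                  (hmaxK_int.const_mul 2), integral_const, integral_const_mul]
                simp
            _ = ‖h‖ * (ε' + 2 * ∫ x, max (x - K) 0 ∂(μ i)) := by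
                rw [← hQNmarg m i, integral_map (f := fun x : ℝ => max (x - K) 0)
                  (hπm i).aemeasurable
                  (((continuous_id.sub continuous_const).max
                    continuous_const)).aestronglyMeasurable]
            _ ≤ ε := by
                have h1 : ∫ x, max (x - K) 0 ∂(μ i) ≤ ε' := hKtail'.le
                have h2 : ‖h‖ * (ε' + 2 * ∫ x, max (x - K) 0 ∂(μ i)) ≤ ‖h‖ * (3 * ε') := by
                  refine mul_le_mul_of_nonneg_left ?_ (norm_nonneg h)
                  linarith
                have h3 : ‖h‖ * (3 * ε') ≤ ε := by
                  rw [hε'def]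
                  rw [div_eq_mul_inv]
                  have hn := norm_nonneg h
                  rw [mul_comm (3:ℝ) (‖h‖ + 1)] at *
                  have : ‖h‖ * (3 * (ε * ((‖h‖ + 1) * 3)⁻¹)) = ε * (‖h‖ / (‖h‖ + 1)) := by
                    field_simp
                  rw [this]
                  have : ‖h‖ / (‖h‖ + 1) ≤ 1 := (div_le_one hpos1).2 (by linarith)
                  nlinarith
                linarith
        · simp [sub_self, abs_of_nonneg, hε.le]
      have hTv' : Tendsto (fun m => ∫ s, h s * gN m (s i) ∂(QN m)) atTop
          (nhds (∫ s, h s * v (s j) ∂Q)) := by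
        refine hTv.congr fun m => hAm m
      have := tendsto_nhds_unique hTv' hTg
      exact this.symm
    · -- strong measurability of g ∘ coordinate
      have h1 : Measurable[MeasurableSpace.comap (fun s : Fin n → ℝ => s i) inferInstance]
          (fun s : Fin n → ℝ => s i) := Measurable.of_comap_le le_rfl
      exact (hgcont.measurable.comp h1).stronglyMeasurable.aestronglyMeasurable
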